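/- Let a, b be nonzero one-variable polynomials over ℂ. For s ∈ ℂ[z,w], the following are equivalent: (i) for every root ζ of a, every root η of b, every k with 0 ≤ k ≤ d_a(ζ) − 1 and every l with 0 ≤ l ≤ d_b(η) − 1, the mixed partial derivative ∂^{k+l} s / ∂z^k ∂w^l vanishes at (ζ, η); (ii) there exist u, v ∈ ℂ[z,w] with s(z,w) = a(z) u(z,w) + b(w) v(z,w). -/

import Mathlib

open MvPolynomial

namespace Stmt8Aux

open Polynomial

noncomputable section

/-! ### One-variable lemmas -/

lemma one_var_dvd (q p : ℂ[X]) (hq : q ≠ 0)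
    (h : ∀ η, q.IsRoot η → ∀ l, l < q.rootMultiplicity η →
      (Polynomial.derivative^[l] p).eval η = 0) :
    (q.roots.map fun η => Polynomial.X - Polynomial.C η).prod ∣ p := by
  classical
  by_cases hp : p = 0
  · simp [hp]
  rw [Multiset.prod_X_sub_C_dvd_iff_le_roots hp, Multiset.le_iff_count]
  intro η
  rw [Polynomial.count_roots, Polynomial.count_roots]
  rcases Nat.eq_zero_or_pos (q.rootMultiplicity η) with h0 | hpos
  · simp [h0]
  have hroot : q.IsRoot η := (Polynomial.rootMultiplicity_pos hq).mp hpos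
  have := Polynomial.lt_rootMultiplicity_of_isRoot_iterate_derivative
    (n := q.rootMultiplicity η - 1) hp (fun m hm => h η hroot m (by omega))
  omega

lemma one_var_zero (q p : ℂ[X]) (hq : q ≠ 0) (hdeg : p.degree < q.degree)
    (h : ∀ η, q.IsRoot η → ∀ l, l < q.rootMultiplicity η →
      (Polynomial.derivative^[l] p).eval η = 0) : p = 0 := by
  by_contra hp
  have hd := one_var_dvd q p hq h
  have h1 : ((q.roots.map fun η => Polynomial.X - Polynomial.C η).prod).degree ≤ p.degree :=
    Polynomial.degree_le_of_dvd hd hp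
  have hcard : Multiset.card q.roots = q.natDegree :=
    Polynomial.splits_iff_card_roots.mp (IsAlgClosed.splits q)
  have h2 : ((q.roots.map fun η => Polynomial.X - Polynomial.C η).prod).degree = (q.natDegree : WithBot ℕ) := by
    rw [Polynomial.degree_eq_natDegree (Polynomial.monic_multiset_prod_of_monic _ _ fun a _ => Polynomial.monic_X_sub_C a).ne_zero,
      Polynomial.natDegree_multiset_prod_X_sub_C_eq_card, hcard]
  rw [h2] at h1
  rw [Polynomial.degree_eq_natDegree hq] at hdeg
  exact absurd (h1.trans_lt hdeg) (lt_irrefl _)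

lemma one_var_a_dvd (a p : ℂ[X]) (ha : a ≠ 0)
    (h : ∀ ζ, a.IsRoot ζ → ∀ k, k < a.rootMultiplicity ζ →
      (Polynomial.derivative^[k] p).eval ζ = 0) : a ∣ p := by
  have hprod := one_var_dvd a p ha h
  have hcard : Multiset.card a.roots = a.natDegree :=
    Polynomial.splits_iff_card_roots.mp (IsAlgClosed.splits a)
  have hfact := Polynomial.C_leadingCoeff_mul_prod_multiset_X_sub_C (p := a) hcard
  obtain ⟨t, ht⟩ := hprod
  have hlc : a.leadingCoeff ≠ 0 := Polynomial.leadingCoeff_ne_zero.mpr ha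
  have hP : (a.roots.map fun η => Polynomial.X - Polynomial.C η).prod
      = Polynomial.C a.leadingCoeff⁻¹ * a := by
    have h' := congrArg (fun x => Polynomial.C a.leadingCoeff⁻¹ * x) hfact
    rw [← h', ← mul_assoc, ← Polynomial.C_mul, inv_mul_cancel₀ hlc, Polynomial.C_1, one_mul]
  refine ⟨Polynomial.C (a.leadingCoeff)⁻¹ * t, ?_⟩
  rw [ht, hP]
  ring

/-! ### pderiv helper lemmas -/

lemma pderiv_comm (i j : Fin 2) (f : MvPolynomial (Fin 2) ℂ) :
    pderiv i (pderiv j f) = pderiv j (pderiv i f) := by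
  classical
  rcases eq_or_ne i j with rfl | hij
  · rfl
  induction f using MvPolynomial.induction_on' with
  | add p q hp hq => simp [hp, hq]
  | monomial s a =>
    simp only [pderiv_monomial]
    have hsub : ∀ (u v : Fin 2), u ≠ v → ∀ (t : Fin 2 →₀ ℕ),
        ((t - Finsupp.single u 1 : Fin 2 →₀ ℕ)) v = t v := by
      intro u v huv t
      rw [Finsupp.tsub_apply, Finsupp.single_apply, if_neg huv, Nat.sub_zero]
    rw [hsub j i (Ne.symm hij), hsub i j hij]
    rw [tsub_right_comm]
    ring_nf

lemma pd_commute : Function.Commute (fun t => pderiv (0 : Fin 2) (R := ℂ) t)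
    (fun t => pderiv (1 : Fin 2) t) := fun f => pderiv_comm 0 1 f

lemma iter_comm (k l : ℕ) (f : MvPolynomial (Fin 2) ℂ) :
    (fun t => pderiv (0 : Fin 2) t)^[k] ((fun t => pderiv (1 : Fin 2) t)^[l] f)
      = (fun t => pderiv (1 : Fin 2) t)^[l] ((fun t => pderiv (0 : Fin 2) t)^[k] f) :=
  ((pd_commute.iterate_left k).iterate_right l) f

lemma pd_iter_add (i : Fin 2) (k : ℕ) (x y : MvPolynomial (Fin 2) ℂ) :
    (fun t => pderiv i t)^[k] (x + y)
      = (fun t => pderiv i t)^[k] x + (fun t => pderiv i t)^[k] y := by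
  induction k generalizing x y with
  | zero => rfl
  | succ k ih => rw [Function.iterate_succ_apply, Function.iterate_succ_apply,
      Function.iterate_succ_apply]; simp only [map_add]; exact ih _ _

lemma pd_iter_mul_of_pderiv_zero (i : Fin 2) (c : MvPolynomial (Fin 2) ℂ)
    (hc : pderiv i c = 0) (k : ℕ) (t : MvPolynomial (Fin 2) ℂ) :
    (fun x => pderiv i x)^[k] (c * t) = c * (fun x => pderiv i x)^[k] t := by
  induction k generalizing t with
  | zero => rfl
  | succ k ih =>
    rw [Function.iterate_succ_apply, Function.iterate_succ_apply]
    simp only [pderiv_mul, hc, zero_mul, zero_add]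
    exact ih _

lemma eval_pd_iter_mul_zero (i : Fin 2) (p : Fin 2 → ℂ) (l : ℕ) :
    ∀ (c t : MvPolynomial (Fin 2) ℂ),
      (∀ j, j ≤ l → MvPolynomial.eval p ((fun x => pderiv i x)^[j] c) = 0) →
      MvPolynomial.eval p ((fun x => pderiv i x)^[l] (c * t)) = 0 := by
  induction l with
  | zero =>
    intro c t h
    have h0 := h 0 le_rfl
    simp only [Function.iterate_zero, id_eq] at h0 ⊢
    rw [map_mul, h0, zero_mul]
  | succ l ih =>
    intro c t h
    rw [Function.iterate_succ_apply]
    simp only [pderiv_mul]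
    rw [pd_iter_add, map_add]
    rw [ih (pderiv i c) t (fun j hj => by
      rw [← Function.iterate_succ_apply]
      exact h (j + 1) (by omega))]
    rw [ih c (pderiv i t) (fun j hj => h j (by omega))]
    ring

/-! ### aeval lemmas -/

lemma eval_aeval0 (ζ η : ℂ) (p : ℂ[X]) :
    MvPolynomial.eval ![ζ, η] (Polynomial.aeval (X 0 : MvPolynomial (Fin 2) ℂ) p)
      = p.eval ζ := by
  induction p using Polynomial.induction_on' with
  | add f g hf hg => simp [hf, hg]
  | monomial n c =>
    simp [Polynomial.aeval_monomial, Polynomial.eval_monomial, algebraMap_eq]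

lemma eval_aeval1 (ζ η : ℂ) (p : ℂ[X]) :
    MvPolynomial.eval ![ζ, η] (Polynomial.aeval (X 1 : MvPolynomial (Fin 2) ℂ) p)
      = p.eval η := by
  induction p using Polynomial.induction_on' with
  | add f g hf hg => simp [hf, hg]
  | monomial n c =>
    simp [Polynomial.aeval_monomial, Polynomial.eval_monomial, algebraMap_eq]

lemma pderiv1_aeval0 (p : ℂ[X]) :
    pderiv (1 : Fin 2) (Polynomial.aeval (X 0 : MvPolynomial (Fin 2) ℂ) p) = 0 := by
  induction p using Polynomial.induction_on' with
  | add f g hf hg => simp [hf, hg]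
  | monomial n c =>
    simp [Polynomial.aeval_monomial, pderiv_mul, pderiv_pow, algebraMap_eq, pderiv_C,
      pderiv_X_of_ne (show (0 : Fin 2) ≠ 1 by decide)]

lemma pderiv0_aeval1 (p : ℂ[X]) :
    pderiv (0 : Fin 2) (Polynomial.aeval (X 1 : MvPolynomial (Fin 2) ℂ) p) = 0 := by
  induction p using Polynomial.induction_on' with
  | add f g hf hg => simp [hf, hg]
  | monomial n c =>
    simp [Polynomial.aeval_monomial, pderiv_mul, pderiv_pow, algebraMap_eq, pderiv_C,
      pderiv_X_of_ne (show (1 : Fin 2) ≠ 0 by decide)]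

lemma pderiv0_aeval0 (p : ℂ[X]) :
    pderiv (0 : Fin 2) (Polynomial.aeval (X 0 : MvPolynomial (Fin 2) ℂ) p)
      = Polynomial.aeval (X 0 : MvPolynomial (Fin 2) ℂ) (Polynomial.derivative p) := by
  induction p using Polynomial.induction_on' with
  | add f g hf hg => simp [hf, hg]
  | monomial n c =>
    rw [Polynomial.aeval_monomial, Polynomial.derivative_monomial, Polynomial.aeval_monomial]
    rw [pderiv_mul, pderiv_pow, pderiv_X_self, mul_one]
    have : pderiv (0 : Fin 2) ((algebraMap ℂ (MvPolynomial (Fin 2) ℂ)) c) = 0 := by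
      simp [algebraMap_eq, pderiv_C]
    rw [this, zero_mul, zero_add]
    simp only [map_mul, map_natCast]
    ring

lemma pderiv1_aeval1 (p : ℂ[X]) :
    pderiv (1 : Fin 2) (Polynomial.aeval (X 1 : MvPolynomial (Fin 2) ℂ) p)
      = Polynomial.aeval (X 1 : MvPolynomial (Fin 2) ℂ) (Polynomial.derivative p) := by
  induction p using Polynomial.induction_on' with
  | add f g hf hg => simp [hf, hg]
  | monomial n c =>
    rw [Polynomial.aeval_monomial, Polynomial.derivative_monomial, Polynomial.aeval_monomial]
    rw [pderiv_mul, pderiv_pow, pderiv_X_self, mul_one]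
    have : pderiv (1 : Fin 2) ((algebraMap ℂ (MvPolynomial (Fin 2) ℂ)) c) = 0 := by
      simp [algebraMap_eq, pderiv_C]
    rw [this, zero_mul, zero_add]
    simp only [map_mul, map_natCast]
    ring

lemma pd0_iter_aeval0 (j : ℕ) (p : ℂ[X]) :
    (fun t => pderiv (0 : Fin 2) t)^[j] (Polynomial.aeval (X 0 : MvPolynomial (Fin 2) ℂ) p)
      = Polynomial.aeval (X 0 : MvPolynomial (Fin 2) ℂ) (Polynomial.derivative^[j] p) := by
  induction j generalizing p with
  | zero => rfl
  | succ j ih =>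
    rw [Function.iterate_succ_apply, Function.iterate_succ_apply, pderiv0_aeval0, ih]

lemma pd1_iter_aeval1 (j : ℕ) (p : ℂ[X]) :
    (fun t => pderiv (1 : Fin 2) t)^[j] (Polynomial.aeval (X 1 : MvPolynomial (Fin 2) ℂ) p)
      = Polynomial.aeval (X 1 : MvPolynomial (Fin 2) ℂ) (Polynomial.derivative^[j] p) := by
  induction j generalizing p with
  | zero => rfl
  | succ j ih =>
    rw [Function.iterate_succ_apply, Function.iterate_succ_apply, pderiv1_aeval1, ih]

/-! ### The two "kill" lemmas -/

lemma eval_term_X0 (c : ℂ[X]) (t : MvPolynomial (Fin 2) ℂ) (ζ η : ℂ) (k l : ℕ)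
    (hc : ∀ j, j ≤ k → (Polynomial.derivative^[j] c).eval ζ = 0) :
    MvPolynomial.eval ![ζ, η]
      ((fun x => pderiv (0 : Fin 2) x)^[k] ((fun x => pderiv (1 : Fin 2) x)^[l]
        (Polynomial.aeval (X 0 : MvPolynomial (Fin 2) ℂ) c * t))) = 0 := by
  rw [pd_iter_mul_of_pderiv_zero 1 _ (pderiv1_aeval0 c) l t]
  exact eval_pd_iter_mul_zero 0 ![ζ, η] k _ _ (fun j hj => by
    rw [pd0_iter_aeval0, eval_aeval0]; exact hc j hj)

lemma eval_term_X1 (c : ℂ[X]) (t : MvPolynomial (Fin 2) ℂ) (ζ η : ℂ) (k l : ℕ)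
    (hc : ∀ j, j ≤ l → (Polynomial.derivative^[j] c).eval η = 0) :
    MvPolynomial.eval ![ζ, η]
      ((fun x => pderiv (0 : Fin 2) x)^[k] ((fun x => pderiv (1 : Fin 2) x)^[l]
        (Polynomial.aeval (X 1 : MvPolynomial (Fin 2) ℂ) c * t))) = 0 := by
  rw [iter_comm]
  rw [pd_iter_mul_of_pderiv_zero 0 _ (pderiv0_aeval1 c) k t]
  exact eval_pd_iter_mul_zero 1 ![ζ, η] l _ _ (fun j hj => by
    rw [pd1_iter_aeval1, eval_aeval1]; exact hc j hj)

/-! ### The map FF : ℂ[z][w] → ℂ[z,w] -/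

def FF : Polynomial (Polynomial ℂ) →ₐ[ℂ] MvPolynomial (Fin 2) ℂ :=
  Polynomial.eval₂AlgHom (Polynomial.aeval (X 0)) (X 1) (fun _ => Commute.all _ _)

lemma FF_C (p : ℂ[X]) : FF (Polynomial.C p) = Polynomial.aeval (X 0) p :=
  Polynomial.eval₂_C _ _

lemma FF_X : FF Polynomial.X = X 1 := Polynomial.eval₂_X _ _

lemma FF_monomial (n : ℕ) (p : ℂ[X]) :
    FF (Polynomial.monomial n p) = Polynomial.aeval (X 0) p * X 1 ^ n := by
  rw [← Polynomial.C_mul_X_pow_eq_monomial, map_mul, map_pow, FF_C, FF_X]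

lemma FF_surjective : Function.Surjective FF := by
  intro s
  induction s using MvPolynomial.induction_on with
  | C c => exact ⟨Polynomial.C (Polynomial.C c), by simp [FF_C]⟩
  | add p q hp hq =>
    obtain ⟨P, hP⟩ := hp; obtain ⟨Q, hQ⟩ := hq
    exact ⟨P + Q, by rw [map_add, hP, hQ]⟩
  | mul_X p n hp =>
    obtain ⟨P, hP⟩ := hp
    match n with
    | 0 => exact ⟨P * Polynomial.C Polynomial.X, by rw [map_mul, hP, FF_C]; simp⟩
    | 1 => exact ⟨P * Polynomial.X, by rw [map_mul, hP, FF_X]⟩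

lemma FF_map_C (p : ℂ[X]) :
    FF (p.map (Polynomial.C : ℂ →+* ℂ[X])) = Polynomial.aeval (X 1) p := by
  induction p using Polynomial.induction_on' with
  | add f g hf hg => simp [Polynomial.map_add, hf, hg]
  | monomial n c =>
    rw [Polynomial.map_monomial, FF_monomial, Polynomial.aeval_monomial]
    simp [algebraMap_eq]

lemma pderiv1_FF (T : Polynomial (Polynomial ℂ)) :
    pderiv (1 : Fin 2) (FF T) = FF (Polynomial.derivative T) := by
  induction T using Polynomial.induction_on' with
  | add f g hf hg => simp only [map_add, hf, hg]
  | monomial n p =>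
    rw [FF_monomial, Polynomial.derivative_monomial, FF_monomial]
    rw [pderiv_mul, pderiv1_aeval0, zero_mul, zero_add, pderiv_pow, pderiv_X_self, mul_one]
    simp only [map_mul, map_natCast]
    ring

lemma pd1_iter_FF (l : ℕ) (T : Polynomial (Polynomial ℂ)) :
    (fun t => pderiv (1 : Fin 2) t)^[l] (FF T) = FF (Polynomial.derivative^[l] T) := by
  induction l generalizing T with
  | zero => rfl
  | succ l ih =>
    rw [Function.iterate_succ_apply, Function.iterate_succ_apply, pderiv1_FF, ih]

/-! ### coefficientwise derivative dz -/

def dz (T : Polynomial (Polynomial ℂ)) : Polynomial (Polynomial ℂ) :=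
  ⟨⟨Finsupp.mapRange (Polynomial.derivative (R := ℂ)) (by simp) T.toFinsupp.coeff⟩⟩

lemma dz_coeff (T : Polynomial (Polynomial ℂ)) (n : ℕ) :
    (dz T).coeff n = Polynomial.derivative (T.coeff n) := by
  rcases T with ⟨⟨f⟩⟩
  simp [dz, Polynomial.coeff, Finsupp.mapRange_apply]

lemma dz_add (x y : Polynomial (Polynomial ℂ)) : dz (x + y) = dz x + dz y := by
  ext n
  simp [dz_coeff, Polynomial.coeff_add]

lemma dz_monomial (n : ℕ) (p : ℂ[X]) :
    dz (Polynomial.monomial n p) = Polynomial.monomial n (Polynomial.derivative p) := by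
  ext m
  rw [dz_coeff, Polynomial.coeff_monomial, Polynomial.coeff_monomial]
  split_ifs <;> simp

lemma pderiv0_FF (T : Polynomial (Polynomial ℂ)) :
    pderiv (0 : Fin 2) (FF T) = FF (dz T) := by
  induction T using Polynomial.induction_on' with
  | add f g hf hg => rw [map_add, map_add, hf, hg, dz_add, map_add]
  | monomial n p =>
    rw [FF_monomial, dz_monomial, FF_monomial]
    rw [pderiv_mul, pderiv0_aeval0, pderiv_pow, pderiv_X_of_ne (show (1:Fin 2) ≠ 0 by decide)]
    ring

lemma pd0_iter_FF (k : ℕ) (T : Polynomial (Polynomial ℂ)) :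
    (fun t => pderiv (0 : Fin 2) t)^[k] (FF T) = FF (dz^[k] T) := by
  induction k generalizing T with
  | zero => rfl
  | succ k ih =>
    rw [Function.iterate_succ_apply, Function.iterate_succ_apply, pderiv0_FF, ih]

lemma dz_iter_coeff (k : ℕ) (T : Polynomial (Polynomial ℂ)) (j : ℕ) :
    (dz^[k] T).coeff j = Polynomial.derivative^[k] (T.coeff j) := by
  induction k generalizing T with
  | zero => rfl
  | succ k ih =>
    rw [Function.iterate_succ_apply, Function.iterate_succ_apply, ih, dz_coeff]

lemma dz_degree_le (T : Polynomial (Polynomial ℂ)) : (dz T).degree ≤ T.degree := by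
  refine Polynomial.degree_le_iff_coeff_zero _ _ |>.mpr (fun m hm => ?_)
  rw [dz_coeff, Polynomial.coeff_eq_zero_of_degree_lt hm, map_zero]

lemma dz_iter_degree_le (k : ℕ) (T : Polynomial (Polynomial ℂ)) :
    (dz^[k] T).degree ≤ T.degree := by
  induction k generalizing T with
  | zero => exact le_rfl
  | succ k ih =>
    rw [Function.iterate_succ_apply]
    exact (ih _).trans (dz_degree_le T)

lemma eval_map_FF (ζ η : ℂ) (T : Polynomial (Polynomial ℂ)) :
    Polynomial.eval η (T.map (Polynomial.evalRingHom ζ))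
      = MvPolynomial.eval ![ζ, η] (FF T) := by
  induction T using Polynomial.induction_on' with
  | add f g hf hg => simp [Polynomial.map_add, hf, hg]
  | monomial n p =>
    rw [Polynomial.map_monomial, Polynomial.eval_monomial, FF_monomial, map_mul, map_pow,
      eval_aeval0, MvPolynomial.eval_X]
    simp

lemma derivative_iter_map (l : ℕ) (T : Polynomial (Polynomial ℂ)) (f : ℂ[X] →+* ℂ) :
    Polynomial.derivative^[l] (T.map f) = (Polynomial.derivative^[l] T).map f := by
  induction l generalizing T with
  | zero => rfl
  | succ l ih =>
    rw [Function.iterate_succ_apply, Function.iterate_succ_apply,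
      Polynomial.derivative_map, ih]

end

end Stmt8Aux

open Stmt8Aux Polynomial in
/-- For nonzero one-variable polynomials `a, b` over `ℂ` and
`s ∈ ℂ[z,w]`: all mixed partials `∂^{k+l} s/∂z^k ∂w^l` of order `k < d_a(ζ)`, `l < d_b(η)`
vanish at every pair of roots `(ζ, η)` of `(a, b)` iff
`s(z,w) = a(z) u(z,w) + b(w) v(z,w)`. -/
theorem stmt_8 (a b : Polynomial ℂ) (ha : a ≠ 0) (hb : b ≠ 0)
    (s : MvPolynomial (Fin 2) ℂ) :
    (∀ ζ η : ℂ, a.IsRoot ζ → b.IsRoot η →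
      ∀ k l : ℕ, k < Polynomial.rootMultiplicity ζ a → l < Polynomial.rootMultiplicity η b →
        MvPolynomial.eval ![ζ, η]
          ((fun t => MvPolynomial.pderiv (0 : Fin 2) t)^[k]
            ((fun t => MvPolynomial.pderiv (1 : Fin 2) t)^[l] s)) = 0) ↔
    ∃ u v : MvPolynomial (Fin 2) ℂ,
      s = Polynomial.aeval (X 0 : MvPolynomial (Fin 2) ℂ) a * u +
          Polynomial.aeval (X 1 : MvPolynomial (Fin 2) ℂ) b * v := by
  constructor
  · -- forward direction
    intro H
    obtain ⟨S, hS⟩ := FF_surjective s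
    set bm := b * Polynomial.C (b.leadingCoeff)⁻¹ with hbm_def
    have hbmM : bm.Monic := Polynomial.monic_mul_leadingCoeff_inv hb
    have hdegbm : bm.degree = b.degree := Polynomial.degree_mul_leadingCoeff_inv b hb
    set B' : Polynomial (Polynomial ℂ) := bm.map (Polynomial.C : ℂ →+* ℂ[X]) with hB'_def
    have hB'M : B'.Monic := hbmM.map _
    have hSdecomp : S %ₘ B' + B' * (S /ₘ B') = S := Polynomial.modByMonic_add_div S B'
    set V := S /ₘ B'
    set Rr := S %ₘ B' with hRr_def
    have hdegB' : B'.degree = b.degree := by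
      rw [hB'_def, Polynomial.degree_map_eq_of_injective Polynomial.C_injective, hdegbm]
    have hdegRr : Rr.degree < b.degree := by
      rw [← hdegB']; exact Polynomial.degree_modByMonic_lt S hB'M
    -- the multiplicities of bm agree with those of b
    have hbm0 : bm ≠ 0 := hbmM.ne_zero
    have hmultbm : ∀ η : ℂ, b.rootMultiplicity η ≤ bm.rootMultiplicity η := by
      intro η
      rw [hbm_def, Polynomial.rootMultiplicity_mul (by rw [← hbm_def]; exact hbm0)]
      omega
    -- the FF image of Rr
    have hFFRr : FF Rr + FF B' * FF V = s := by
      rw [← map_mul, ← map_add, hSdecomp, hS]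
    -- derivative conditions for FF Rr
    have hRrcond : ∀ ζ η : ℂ, a.IsRoot ζ → b.IsRoot η →
        ∀ k l : ℕ, k < a.rootMultiplicity ζ → l < b.rootMultiplicity η →
        MvPolynomial.eval ![ζ, η]
          ((fun t => pderiv (0 : Fin 2) t)^[k]
            ((fun t => pderiv (1 : Fin 2) t)^[l] (FF Rr))) = 0 := by
      intro ζ η hζ hη k l hk hl
      have hs' := H ζ η hζ hη k l hk hl
      have hB'term : MvPolynomial.eval ![ζ, η]
          ((fun t => pderiv (0 : Fin 2) t)^[k]
            ((fun t => pderiv (1 : Fin 2) t)^[l] (FF B' * FF V))) = 0 := by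
        have : FF B' = Polynomial.aeval (X 1) bm := FF_map_C bm
        rw [this]
        exact eval_term_X1 bm (FF V) ζ η k l (fun j hj =>
          Polynomial.isRoot_iterate_derivative_of_lt_rootMultiplicity
            (lt_of_lt_of_le (lt_of_le_of_lt hj hl) (hmultbm η)))
      have := congrArg (MvPolynomial.eval ![ζ, η])
        (congrArg ((fun t => pderiv (0 : Fin 2) t)^[k])
          (congrArg ((fun t => pderiv (1 : Fin 2) t)^[l]) hFFRr))
      rw [pd_iter_add, pd_iter_add, map_add, hB'term, add_zero] at this
      rw [this, hs']
    -- all coefficients of Rr are divisible by a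
    have key : ∀ j, a ∣ Rr.coeff j := by
      intro j
      apply one_var_a_dvd a _ ha
      intro ζ hζ k hk
      have hq0 : (dz^[k] Rr).map (Polynomial.evalRingHom ζ) = 0 := by
        apply one_var_zero b _ hb
        · exact lt_of_le_of_lt
            ((Polynomial.degree_map_le).trans (dz_iter_degree_le k Rr)) hdegRr
        · intro η hη l hl
          rw [derivative_iter_map, eval_map_FF, ← pd1_iter_FF, ← pd0_iter_FF, ← iter_comm]
          exact hRrcond ζ η hζ hη k l hk hl
      have := congrArg (fun T => T.coeff j) hq0
      simp only [Polynomial.coeff_map, dz_iter_coeff, Polynomial.coeff_zero] at this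
      exact this
    obtain ⟨U, hU⟩ := (Polynomial.C_dvd_iff_dvd_coeff a Rr).mpr key
    refine ⟨FF U, MvPolynomial.C (b.leadingCoeff)⁻¹ * FF V, ?_⟩
    have h1 : FF B' = Polynomial.aeval (X 1) bm := FF_map_C bm
    have h2 : (Polynomial.aeval (X 1 : MvPolynomial (Fin 2) ℂ)) bm
        = Polynomial.aeval (X 1) b * MvPolynomial.C (b.leadingCoeff)⁻¹ := by
      rw [hbm_def, map_mul, Polynomial.aeval_C, MvPolynomial.algebraMap_eq]
    rw [← hFFRr, hU, map_mul, FF_C, h1, h2]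
    ring
  · -- backward direction
    rintro ⟨u, v, rfl⟩ ζ η hζ hη k l hk hl
    rw [pd_iter_add, pd_iter_add, map_add]
    rw [eval_term_X0 a u ζ η k l (fun j hj =>
      Polynomial.isRoot_iterate_derivative_of_lt_rootMultiplicity (lt_of_le_of_lt hj hk))]
    rw [eval_term_X1 b v ζ η k l (fun j hj =>
      Polynomial.isRoot_iterate_derivative_of_lt_rootMultiplicity (lt_of_le_of_lt hj hl))]
    norm_num
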